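/- If two three-qubit W-class states have Acín Schmidt decompositions λ₀|000⟩ + λ₁e^{iφ}|100⟩ + λ₂|101⟩ + λ₃|110⟩ and μ₀|000⟩ + μ₁e^{iψ}|100⟩ + μ₂|101⟩ + μ₃|110⟩ with λᵢ = μᵢ for all i (regardless of the phases φ, ψ), then the two states are LU equivalent. -/
import Mathlib


/-- Action of local operators A ⊗ B ⊗ C on a three-qubit coefficient tensor. -/
noncomputable def luAct (A B C : Matrix (Fin 2) (Fin 2) ℂ)
    (ψ : Fin 2 → Fin 2 → Fin 2 → ℂ) : Fin 2 → Fin 2 → Fin 2 → ℂ :=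
  fun i j k => ∑ a : Fin 2, ∑ b : Fin 2, ∑ c : Fin 2, A i a * B j b * C k c * ψ a b c

/-- LU equivalence of three-qubit states. -/
def LUequiv (ψ φ : Fin 2 → Fin 2 → Fin 2 → ℂ) : Prop :=
  ∃ A B C : Matrix (Fin 2) (Fin 2) ℂ,
    A ∈ Matrix.unitaryGroup (Fin 2) ℂ ∧ B ∈ Matrix.unitaryGroup (Fin 2) ℂ ∧
    C ∈ Matrix.unitaryGroup (Fin 2) ℂ ∧ φ = luAct A B C ψ

noncomputable def phaseMat (t : ℝ) : Matrix (Fin 2) (Fin 2) ℂ :=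
  !![1, 0; 0, Complex.exp (Complex.I * t)]

lemma phaseMat_unitary (t : ℝ) : phaseMat t ∈ Matrix.unitaryGroup (Fin 2) ℂ := by
  rw [Matrix.mem_unitaryGroup_iff]
  ext i j
  fin_cases i <;> fin_cases j <;>
    simp [phaseMat, Matrix.mul_apply, Fin.sum_univ_two, Matrix.one_apply,
      ← Complex.exp_conj, ← Complex.exp_add, Complex.conj_ofReal, map_mul]

theorem stmt_15 (l0 l1 l2 l3 : ℝ) (φ ψangle : ℝ)
    (hl0 : 0 < l0) (hl2 : 0 < l2) (hl3 : 0 < l3) (hl1 : 0 ≤ l1)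
    (hnorm : l0^2 + l1^2 + l2^2 + l3^2 = 1)
    (Ψ Φ : Fin 2 → Fin 2 → Fin 2 → ℂ)
    (hΨ : Ψ = fun i j k =>
      if i = 0 ∧ j = 0 ∧ k = 0 then (l0 : ℂ)
      else if i = 1 ∧ j = 0 ∧ k = 0 then (l1 : ℂ) * Complex.exp (Complex.I * φ)
      else if i = 1 ∧ j = 0 ∧ k = 1 then (l2 : ℂ)
      else if i = 1 ∧ j = 1 ∧ k = 0 then (l3 : ℂ)
      else 0)
    (hΦ : Φ = fun i j k =>
      if i = 0 ∧ j = 0 ∧ k = 0 then (l0 : ℂ)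
      else if i = 1 ∧ j = 0 ∧ k = 0 then (l1 : ℂ) * Complex.exp (Complex.I * ψangle)
      else if i = 1 ∧ j = 0 ∧ k = 1 then (l2 : ℂ)
      else if i = 1 ∧ j = 1 ∧ k = 0 then (l3 : ℂ)
      else 0) :
    LUequiv Ψ Φ := by
  refine ⟨phaseMat (ψangle - φ), phaseMat (φ - ψangle), phaseMat (φ - ψangle),
    phaseMat_unitary _, phaseMat_unitary _, phaseMat_unitary _, ?_⟩
  funext i j k
  fin_cases i <;> fin_cases j <;> fin_cases k <;>
    simp only [luAct, Fin.sum_univ_two, phaseMat, hΨ, hΦ] <;> simp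
  · rw [mul_left_comm, ← Complex.exp_add]; ring_nf
  · rw [← Complex.exp_add]; ring_nf; simp [Complex.exp_zero]
  · rw [← Complex.exp_add]; ring_nf; simp [Complex.exp_zero]
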